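/- Let r ≥ 2 and n ≥ 1 be integers. The R-Bonacci polynomial R_n satisfies the algebraic representation R_n(x) = ∑_{j=0}^{⌊(r-1)(n-1)/r⌋} C_r(n - j - 1, j) · x^{(r-1)(n-1) - rj}. -/

import Mathlib

noncomputable def RBon (r : ℕ) : ℕ → Polynomial ℂ
  | 0 => 0
  | 1 => 1
  | n + 2 => ∑ i ∈ (Finset.range r).attach,
      Polynomial.X ^ (i : ℕ) * RBon r (n + 2 - (r - (i : ℕ)))
  decreasing_by
    have h := i.2
    rw [Finset.mem_range] at h
    omega

noncomputable def rnomial (r n j : ℕ) : ℕ :=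
  ((∑ i ∈ Finset.range r, (Polynomial.X : Polynomial ℕ) ^ i) ^ n).coeff j

lemma rnomial_succ (r a j : ℕ) :
    rnomial r (a+1) j = ∑ k ∈ Finset.range r, if k ≤ j then rnomial r a (j-k) else 0 := by
  unfold rnomial
  rw [pow_succ', Finset.sum_mul, Polynomial.finset_sum_coeff]
  refine Finset.sum_congr rfl fun k hk => ?_
  rw [Polynomial.X_pow_mul, Polynomial.coeff_mul_X_pow']

lemma rnomial_eq_zero (r a j : ℕ) (h : (r-1)*a < j) : rnomial r a j = 0 := by
  unfold rnomial
  apply Polynomial.coeff_eq_zero_of_natDegree_lt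
  calc ((∑ i ∈ Finset.range r, (Polynomial.X : Polynomial ℕ) ^ i) ^ a).natDegree
      ≤ a * (∑ i ∈ Finset.range r, (Polynomial.X : Polynomial ℕ) ^ i).natDegree :=
        Polynomial.natDegree_pow_le
    _ ≤ a * (r-1) := by
        refine Nat.mul_le_mul_left a ?_
        apply Polynomial.natDegree_sum_le_of_forall_le
        intro i hi
        simp only [Polynomial.natDegree_X_pow]
        exact Nat.le_pred_of_lt (Finset.mem_range.mp hi)
    _ = (r-1) * a := Nat.mul_comm _ _
    _ < j := h

noncomputable def Spoly (r m : ℕ) : Polynomial ℂ :=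
  ∑ j ∈ Finset.range m,
    Polynomial.C (rnomial r (m - j - 1) j : ℂ) * Polynomial.X ^ ((r-1)*(m-1) - r*j)

open Polynomial in
lemma Spoly_rec (r n : ℕ) (hr : 2 ≤ r) :
    Spoly r (n+2) = ∑ i ∈ Finset.range r, Polynomial.X ^ i * Spoly r (n+2 - (r - i)) := by
  set N := n + 1 with hN
  have hLHS : Spoly r (n+2) = ∑ k ∈ Finset.range r, ∑ j' ∈ Finset.range (N - k),
      Polynomial.C (rnomial r (N - (k + j') - 1) j' : ℂ)
        * Polynomial.X ^ ((r-1)*N - r*(k + j')) := by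
    rw [Spoly]
    have h2 : n + 2 = N + 1 := rfl
    rw [h2, Finset.sum_range_succ]
    have hz : rnomial r (N + 1 - N - 1) N = 0 := by
      apply rnomial_eq_zero; simp; omega
    rw [hz]
    push_cast
    rw [map_zero, zero_mul, add_zero]
    have step : ∀ j ∈ Finset.range N,
        Polynomial.C (rnomial r (N + 1 - j - 1) j : ℂ) * Polynomial.X ^ ((r-1)*N - r*j)
          = ∑ k ∈ Finset.range r, (if k ≤ j then
              Polynomial.C (rnomial r (N - j - 1) (j - k) : ℂ) else 0)
                * Polynomial.X ^ ((r-1)*N - r*j) := by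
      intro j hj
      rw [Finset.mem_range] at hj
      have h3 : N + 1 - j - 1 = (N - j - 1) + 1 := by omega
      rw [h3, rnomial_succ]
      push_cast
      rw [map_sum, Finset.sum_mul]
      refine Finset.sum_congr rfl fun k hk => ?_
      split_ifs <;> simp
    rw [Finset.sum_congr rfl step, Finset.sum_comm]
    refine Finset.sum_congr rfl fun k hk => ?_
    simp only [ite_mul, zero_mul]
    rw [← Finset.sum_filter]
    have hfil : Finset.filter (fun j => k ≤ j) (Finset.range N) = Finset.Ico k N := by
      ext x; simp [Finset.mem_filter, Finset.mem_Ico]; omega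
    rw [hfil, Finset.sum_Ico_eq_sum_range]
    refine Finset.sum_congr rfl fun j' hj' => ?_
    rw [Nat.add_sub_cancel_left]
  rw [hLHS]
  conv_rhs => rw [← Finset.sum_range_reflect]
  refine Finset.sum_congr rfl fun k hk => ?_
  rw [Finset.mem_range] at hk
  have h5 : n + 2 - (r - (r - 1 - k)) = N - k := by omega
  rw [h5, Spoly, Finset.mul_sum]
  refine Finset.sum_congr rfl fun j' hj' => ?_
  rw [Finset.mem_range] at hj'
  have h6 : N - k - j' - 1 = N - (k + j') - 1 := by omega
  rw [h6]
  by_cases hc : r * j' ≤ (r-1) * (N - k - 1)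
  · have h1 : (r-1)*N = (r-1)*(N-k-1) + (r-1)*(k+1) := by
      rw [← Nat.mul_add]; congr 1; omega
    have h2 : r * (k+1) = (r-1)*(k+1) + (k+1) := by
      conv_lhs => rw [show r = (r-1)+1 by omega]
      ring
    have h3 : r * (k + j') = r * k + r * j' := by ring
    have h4 : r * (k+1) = r * k + r := by ring
    have hexp : (r-1)*N - r*(k+j') = (r - 1 - k) + ((r-1)*(N-k-1) - r*j') := by
      omega
    rw [hexp, pow_add]
    ring
  · have hz : rnomial r (N - (k + j') - 1) j' = 0 := by
      apply rnomial_eq_zero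
      have h5' : (r-1)*(N-k-1) = (r-1)*(N-(k+j')-1) + (r-1)*j' := by
        rw [← Nat.mul_add]; congr 1; omega
      have h6' : r * j' = (r-1)*j' + j' := by
        conv_lhs => rw [show r = (r-1)+1 by omega]
        ring
      omega
    rw [hz]
    push_cast
    rw [map_zero, zero_mul, zero_mul, mul_zero]

lemma RBon_eq_Spoly (r : ℕ) (hr : 2 ≤ r) : ∀ n, RBon r n = Spoly r n := by
  intro n
  induction n using Nat.strong_induction_on with
  | _ n ih =>
    match n with
    | 0 => simp [RBon, Spoly]
    | 1 => simp [RBon, Spoly, rnomial]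
    | (m+2) =>
      rw [RBon, Finset.sum_attach (Finset.range r)
        (fun i => Polynomial.X ^ i * RBon r (m + 2 - (r - i)))]
      rw [Spoly_rec r m hr]
      refine Finset.sum_congr rfl fun i hi => ?_
      rw [Finset.mem_range] at hi
      rw [ih (m + 2 - (r - i)) (by omega)]

theorem stmt_14 (r n : ℕ) (hr : 2 ≤ r) (hn : 1 ≤ n) :
    RBon r n = ∑ j ∈ Finset.range ((r - 1) * (n - 1) / r + 1),
      Polynomial.C (rnomial r (n - j - 1) j : ℂ)
        * Polynomial.X ^ ((r - 1) * (n - 1) - r * j) := by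
  rw [RBon_eq_Spoly r hr n, Spoly]
  refine (Finset.sum_subset ?_ ?_).symm
  · rw [Finset.range_subset_range]
    set q := (r - 1) * (n - 1) / r with hq
    have h1 : (r-1)*(n-1) ≤ r*(n-1) := Nat.mul_le_mul_right _ (by omega)
    have h2 : q ≤ n - 1 := by
      rw [hq]
      calc (r - 1) * (n - 1) / r ≤ r * (n-1) / r := Nat.div_le_div_right h1
        _ = n - 1 := Nat.mul_div_cancel_left _ (by omega)
    omega
  · intro j hj hj'
    rw [Finset.mem_range] at hj hj'
    have hz : rnomial r (n - j - 1) j = 0 := by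
      apply rnomial_eq_zero
      set q := (r - 1) * (n - 1) / r with hq
      have hd : r * q + (r-1)*(n-1) % r = (r-1)*(n-1) := by
        rw [hq]; exact Nat.div_add_mod _ _
      have hmod := Nat.mod_lt ((r-1)*(n-1)) (show 0 < r by omega)
      have hm1 : r * (q + 1) ≤ r * j := Nat.mul_le_mul_left _ (by omega)
      have hm2 : r * (q + 1) = r * q + r := by ring
      have h5 : (r-1)*(n-1) = (r-1)*(n-j-1) + (r-1)*j := by
        rw [← Nat.mul_add]; congr 1; omega
      have h6 : r * j = (r-1)*j + j := by
        conv_lhs => rw [show r = (r-1)+1 by omega]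
        ring
      omega
    rw [hz]
    push_cast
    rw [map_zero, zero_mul]
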